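/- arXiv:1806.10191 — 2 statements merged into one kernel-verified Lean document; each statement's English description precedes it below -/
import Mathlib

section
/- Assume P is uniformly elliptic with constant α > 0 (ξ·P(x)ξ ≥ α|ξ|² for a.e. x ∈ Ω and all ξ ∈ ℝ^m), |r_k(x)| ≤ R_k a.e. on Ω with B = (Σ_k R_k²)^{1/2}, and q1(x) ≥ α/2 + B²/(2α) for a.e. x ∈ Ω. Then for all u1, u2 ∈ C¹_c(Ω), the quadratic form satisfies a((u1,u2),(u1,u2)) ≥ (α/2)(‖u1‖₁² + ‖u2‖₁²); in particular the bilinear form a is coercive on pairs of functions in C¹_c(Ω) with respect to the norm (‖u1‖₁² + ‖u2‖₁²)^{1/2}. -/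
open MeasureTheory Matrix

/-- The gradient of `u : ℝ^m → ℝ` at `x`, as the vector of partial derivatives. -/
noncomputable def grad (m : ℕ) (u : (Fin m → ℝ) → ℝ) (x : Fin m → ℝ) : Fin m → ℝ :=
  fun i => fderiv ℝ u x (Pi.single i 1)

/-- `u ∈ C¹_c(Ω)`: continuously differentiable with compact support contained in `Ω`. -/
def C1c (m : ℕ) (Ω : Set (Fin m → ℝ)) (u : (Fin m → ℝ) → ℝ) : Prop :=
  ContDiff ℝ 1 u ∧ HasCompactSupport u ∧ tsupport u ⊆ Ω

/-- `‖u‖₀ = (∫_Ω u²)^(1/2)`. -/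
noncomputable def normL2 (m : ℕ) (Ω : Set (Fin m → ℝ)) (u : (Fin m → ℝ) → ℝ) : ℝ :=
  Real.sqrt (∫ x in Ω, (u x) ^ 2)

/-- `|u|₁ = (∫_Ω |∇u|²)^(1/2)`. -/
noncomputable def semiH1 (m : ℕ) (Ω : Set (Fin m → ℝ)) (u : (Fin m → ℝ) → ℝ) : ℝ :=
  Real.sqrt (∫ x in Ω, ∑ i, (grad m u x i) ^ 2)

/-- `‖u‖₁ = (‖u‖₀² + |u|₁²)^(1/2)`. -/
noncomputable def normH1 (m : ℕ) (Ω : Set (Fin m → ℝ)) (u : (Fin m → ℝ) → ℝ) : ℝ :=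
  Real.sqrt ((normL2 m Ω u) ^ 2 + (semiH1 m Ω u) ^ 2)

/-- The bilinear form of the coupled elliptic system:
`a(u,v) = ∫_Ω [∇v1·P∇u1 + ∇v2·P∇u2] + ∫_Ω [v1 (R·∇u1) + v2 (R·∇u2)]
        + ∫_Ω [q1 u1 v1 + q2 u2 v1 + q1 u2 v2 − q2 u1 v2]`. -/
noncomputable def aForm (m : ℕ) (Ω : Set (Fin m → ℝ))
    (P : (Fin m → ℝ) → Matrix (Fin m) (Fin m) ℝ)
    (Rv : (Fin m → ℝ) → Fin m → ℝ) (q1 q2 : (Fin m → ℝ) → ℝ)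
    (u1 u2 v1 v2 : (Fin m → ℝ) → ℝ) : ℝ :=
  (∫ x in Ω, (grad m v1 x ⬝ᵥ (P x).mulVec (grad m u1 x)
      + grad m v2 x ⬝ᵥ (P x).mulVec (grad m u2 x)))
  + (∫ x in Ω, (v1 x * (Rv x ⬝ᵥ grad m u1 x) + v2 x * (Rv x ⬝ᵥ grad m u2 x)))
  + (∫ x in Ω, (q1 x * u1 x * v1 x + q2 x * u2 x * v1 x
      + q1 x * u2 x * v2 x - q2 x * u1 x * v2 x))

lemma amgm_aux {a b t : ℝ} (ha : 0 ≤ a) (hb : 0 ≤ b) (ht : t ^ 2 ≤ 4 * a * b) :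
    -(a + b) ≤ t := by
  nlinarith [sq_nonneg (a - b), sq_nonneg (a + b)]

lemma grad_continuous {m Ω u} (hu : C1c m Ω u) (i : Fin m) :
    Continuous fun x => grad m u x i :=
  (hu.1.continuous_fderiv one_ne_zero).clm_apply continuous_const

lemma grad_hcs {m Ω u} (hu : C1c m Ω u) (i : Fin m) :
    HasCompactSupport fun x => grad m u x i :=
  hu.2.1.fderiv_apply ℝ (Pi.single i 1)

lemma integ_bdd_mul {m : ℕ} {Ω : Set (Fin m → ℝ)} {q : (Fin m → ℝ) → ℝ} {C : ℝ}
    (hq : Measurable q) (hbd : ∀ᵐ x ∂(volume.restrict Ω), |q x| ≤ C)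
    {f : (Fin m → ℝ) → ℝ} (hfc : Continuous f) (hfs : HasCompactSupport f) :
    Integrable (fun x => q x * f x) (volume.restrict Ω) :=
  ((hfc.integrable_of_hasCompactSupport hfs).restrict).bdd_mul
    hq.aestronglyMeasurable (by simpa [Real.norm_eq_abs] using hbd)

theorem stmt3 (m : ℕ) (hm : 1 ≤ m)
    (Ω : Set (Fin m → ℝ)) (hΩo : IsOpen Ω) (hΩb : Bornology.IsBounded Ω)
    (P : (Fin m → ℝ) → Matrix (Fin m) (Fin m) ℝ)
    (hPm : ∀ i j, Measurable fun x => P x i j)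
    (M : ℝ) (hPbd : ∀ᵐ x ∂(volume.restrict Ω), ∀ i j, |P x i j| ≤ M)
    (hPsymm : ∀ᵐ x ∂(volume.restrict Ω), (P x).IsSymm)
    (α : ℝ) (hα : 0 < α)
    (hell : ∀ᵐ x ∂(volume.restrict Ω), ∀ ξ : Fin m → ℝ,
      α * ∑ i, (ξ i) ^ 2 ≤ ξ ⬝ᵥ (P x).mulVec ξ)
    (Rv : (Fin m → ℝ) → Fin m → ℝ) (hRm : ∀ k, Measurable fun x => Rv x k)
    (R : Fin m → ℝ) (hRbd : ∀ᵐ x ∂(volume.restrict Ω), ∀ k, |Rv x k| ≤ R k)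
    (B : ℝ) (hB : B = Real.sqrt (∑ k, (R k) ^ 2))
    (q1 q2 : (Fin m → ℝ) → ℝ) (hq1m : Measurable q1) (hq2m : Measurable q2)
    (Q1 Q2 : ℝ)
    (hq1bd : ∀ᵐ x ∂(volume.restrict Ω), |q1 x| ≤ Q1)
    (hq2bd : ∀ᵐ x ∂(volume.restrict Ω), |q2 x| ≤ Q2)
    (hq1lb : ∀ᵐ x ∂(volume.restrict Ω), α / 2 + B ^ 2 / (2 * α) ≤ q1 x)
    (u1 u2 : (Fin m → ℝ) → ℝ) (hu1 : C1c m Ω u1) (hu2 : C1c m Ω u2) :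
    α / 2 * ((normH1 m Ω u1) ^ 2 + (normH1 m Ω u2) ^ 2) ≤
      aForm m Ω P Rv q1 q2 u1 u2 u1 u2 := by
  have hu1c : Continuous u1 := hu1.1.continuous
  have hu2c : Continuous u2 := hu2.1.continuous
  have hu1s : HasCompactSupport u1 := hu1.2.1
  have hu2s : HasCompactSupport u2 := hu2.2.1
  have hg1c := grad_continuous hu1
  have hg2c := grad_continuous hu2
  have hg1s := grad_hcs hu1
  have hg2s := grad_hcs hu2
  set μ := volume.restrict Ω with hμ
  have hBnn : 0 ≤ B := hB ▸ Real.sqrt_nonneg _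
  have hB2 : B ^ 2 = ∑ k, (R k) ^ 2 := by
    rw [hB, Real.sq_sqrt (Finset.sum_nonneg fun k _ => sq_nonneg _)]
  -- integrability of the elliptic part
  have hIntP : ∀ (u : (Fin m → ℝ) → ℝ) (hu : C1c m Ω u),
      Integrable (fun x => grad m u x ⬝ᵥ (P x).mulVec (grad m u x)) μ := by
    intro u hu
    have : Integrable (fun x => ∑ i, ∑ j, P x i j * (grad m u x i * grad m u x j)) μ := by
      apply integrable_finset_sum _ fun i _ => ?_
      apply integrable_finset_sum _ fun j _ => ?_
      exact integ_bdd_mul (hPm i j) (hPbd.mono fun x h => h i j)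
        ((grad_continuous hu i).mul (grad_continuous hu j)) ((grad_hcs hu i).mul_right)
    refine this.congr (Filter.Eventually.of_forall fun x => ?_)
    simp only [dotProduct, Matrix.mulVec, Finset.mul_sum]
    exact Finset.sum_congr rfl fun i _ => Finset.sum_congr rfl fun j _ => by ring
  -- integrability of the convection part
  have hIntR : ∀ (u : (Fin m → ℝ) → ℝ) (hu : C1c m Ω u),
      Integrable (fun x => u x * (Rv x ⬝ᵥ grad m u x)) μ := by
    intro u hu
    have : Integrable (fun x => ∑ k, Rv x k * (u x * grad m u x k)) μ := by
      apply integrable_finset_sum _ fun k _ => ?_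
      exact integ_bdd_mul (hRm k) (hRbd.mono fun x h => h k)
        (hu.1.continuous.mul (grad_continuous hu k)) (hu.2.1.mul_right)
    refine this.congr (Filter.Eventually.of_forall fun x => ?_)
    simp only [dotProduct, Finset.mul_sum]
    exact Finset.sum_congr rfl fun k _ => by ring
  have hA : Integrable (fun x => grad m u1 x ⬝ᵥ (P x).mulVec (grad m u1 x)
      + grad m u2 x ⬝ᵥ (P x).mulVec (grad m u2 x)) μ := (hIntP u1 hu1).add (hIntP u2 hu2)
  have hBint : Integrable (fun x => u1 x * (Rv x ⬝ᵥ grad m u1 x)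
      + u2 x * (Rv x ⬝ᵥ grad m u2 x)) μ := (hIntR u1 hu1).add (hIntR u2 hu2)
  have hsq : ∀ (u : (Fin m → ℝ) → ℝ), Continuous u → HasCompactSupport u →
      HasCompactSupport (fun x => u x ^ 2) := by
    intro u hc hs
    exact hs.comp_left (g := fun t : ℝ => t ^ 2) (by simp)
  have hC : Integrable (fun x => q1 x * u1 x * u1 x + q2 x * u2 x * u1 x
      + q1 x * u2 x * u2 x - q2 x * u1 x * u2 x) μ := by
    have h1 : Integrable (fun x => q1 x * (u1 x ^ 2) + q1 x * (u2 x ^ 2)) μ :=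
      (integ_bdd_mul hq1m hq1bd (hu1c.pow 2) (hsq u1 hu1c hu1s)).add
        (integ_bdd_mul hq1m hq1bd (hu2c.pow 2) (hsq u2 hu2c hu2s))
    refine h1.congr (Filter.Eventually.of_forall fun x => ?_)
    ring
  -- the lower bound integrand
  set D : (Fin m → ℝ) → ℝ := fun x =>
    α / 2 * ((u1 x ^ 2 + ∑ i, grad m u1 x i ^ 2) + (u2 x ^ 2 + ∑ i, grad m u2 x i ^ 2))
    with hD
  have hIntsq : ∀ (u : (Fin m → ℝ) → ℝ), Continuous u → HasCompactSupport u →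
      Integrable (fun x => u x ^ 2) μ := fun u hc hs =>
    ((hc.pow 2).integrable_of_hasCompactSupport (hsq u hc hs)).restrict
  have hIntg : ∀ (u : (Fin m → ℝ) → ℝ) (hu : C1c m Ω u),
      Integrable (fun x => ∑ i, grad m u x i ^ 2) μ := by
    intro u hu
    apply integrable_finset_sum _ fun i _ => ?_
    exact hIntsq _ (grad_continuous hu i) (grad_hcs hu i)
  have hIntD : Integrable D μ := by
    apply Integrable.const_mul
    exact ((hIntsq u1 hu1c hu1s).add (hIntg u1 hu1)).add ((hIntsq u2 hu2c hu2s).add (hIntg u2 hu2))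
  -- pointwise a.e. inequality
  have hpt : ∀ᵐ x ∂μ, D x ≤
      (grad m u1 x ⬝ᵥ (P x).mulVec (grad m u1 x) + grad m u2 x ⬝ᵥ (P x).mulVec (grad m u2 x))
      + (u1 x * (Rv x ⬝ᵥ grad m u1 x) + u2 x * (Rv x ⬝ᵥ grad m u2 x))
      + (q1 x * u1 x * u1 x + q2 x * u2 x * u1 x + q1 x * u2 x * u2 x - q2 x * u1 x * u2 x) := by
    filter_upwards [hell, hRbd, hq1lb] with x hellx hRx hq1x
    have key : ∀ (u : (Fin m → ℝ) → ℝ),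
        -(α / 2 * (∑ i, grad m u x i ^ 2) + B ^ 2 / (2 * α) * (u x ^ 2)) ≤
          u x * (Rv x ⬝ᵥ grad m u x) := by
      intro u
      have hS : (0:ℝ) ≤ ∑ i, grad m u x i ^ 2 := Finset.sum_nonneg fun i _ => sq_nonneg _
      apply amgm_aux (by positivity) (by positivity)
      have hcs : (Rv x ⬝ᵥ grad m u x) ^ 2 ≤ B ^ 2 * ∑ i, grad m u x i ^ 2 := by
        refine le_trans (Finset.sum_mul_sq_le_sq_mul_sq Finset.univ (fun k => Rv x k)
          (fun k => grad m u x k)) ?_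
        rw [hB2]
        have hRk : ∀ k, Rv x k ^ 2 ≤ R k ^ 2 := fun k =>
          sq_le_sq' (abs_le.mp ((hRx k).trans (le_abs_self _)) |>.1)
            (abs_le.mp ((hRx k).trans (le_abs_self _)) |>.2) |>.trans (sq_abs (R k)).le
        exact mul_le_mul_of_nonneg_right (Finset.sum_le_sum fun k _ => hRk k) hS
      have h4 : 4 * (α / 2 * (∑ i, grad m u x i ^ 2)) * (B ^ 2 / (2 * α) * (u x ^ 2))
          = B ^ 2 * (∑ i, grad m u x i ^ 2) * (u x ^ 2) := by
        field_simp
        ring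
      rw [h4]
      calc (u x * (Rv x ⬝ᵥ grad m u x)) ^ 2
          = u x ^ 2 * (Rv x ⬝ᵥ grad m u x) ^ 2 := by ring
        _ ≤ u x ^ 2 * (B ^ 2 * ∑ i, grad m u x i ^ 2) :=
            mul_le_mul_of_nonneg_left hcs (sq_nonneg _)
        _ = B ^ 2 * (∑ i, grad m u x i ^ 2) * (u x ^ 2) := by ring
    have e1 := hellx (grad m u1 x)
    have e2 := hellx (grad m u2 x)
    have k1 := key u1
    have k2 := key u2
    have hqm : (α / 2 + B ^ 2 / (2 * α)) * (u1 x ^ 2 + u2 x ^ 2)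
        ≤ q1 x * (u1 x ^ 2 + u2 x ^ 2) :=
      mul_le_mul_of_nonneg_right hq1x (by positivity)
    simp only [hD]
    nlinarith [e1, e2, k1, k2, hqm]
  -- assemble
  have hnorm : ∀ (u : (Fin m → ℝ) → ℝ), normH1 m Ω u ^ 2
      = (∫ x in Ω, u x ^ 2) + ∫ x in Ω, ∑ i, grad m u x i ^ 2 := by
    intro u
    rw [normH1, Real.sq_sqrt (add_nonneg (sq_nonneg _) (sq_nonneg _)), normL2, semiH1,
      Real.sq_sqrt (integral_nonneg fun x => sq_nonneg _),
      Real.sq_sqrt (integral_nonneg fun x => Finset.sum_nonneg fun i _ => sq_nonneg _)]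
  have hDint : ∫ x in Ω, D x = α / 2 * ((normH1 m Ω u1) ^ 2 + (normH1 m Ω u2) ^ 2) := by
    have h1 : Integrable (fun x => u1 x ^ 2 + ∑ i, grad m u1 x i ^ 2) μ :=
      (hIntsq u1 hu1c hu1s).add (hIntg u1 hu1)
    have h2 : Integrable (fun x => u2 x ^ 2 + ∑ i, grad m u2 x i ^ 2) μ :=
      (hIntsq u2 hu2c hu2s).add (hIntg u2 hu2)
    simp only [hD]
    rw [integral_const_mul, integral_add h1 h2,
      integral_add (hIntsq u1 hu1c hu1s) (hIntg u1 hu1),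
      integral_add (hIntsq u2 hu2c hu2s) (hIntg u2 hu2), hnorm u1, hnorm u2]
  have hmono : ∫ x in Ω, D x ≤ ∫ x in Ω,
      ((grad m u1 x ⬝ᵥ (P x).mulVec (grad m u1 x) + grad m u2 x ⬝ᵥ (P x).mulVec (grad m u2 x))
      + (u1 x * (Rv x ⬝ᵥ grad m u1 x) + u2 x * (Rv x ⬝ᵥ grad m u2 x))
      + (q1 x * u1 x * u1 x + q2 x * u2 x * u1 x + q1 x * u2 x * u2 x - q2 x * u1 x * u2 x)) :=
    integral_mono_ae hIntD ((hA.add hBint).add hC) hpt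
  calc α / 2 * ((normH1 m Ω u1) ^ 2 + (normH1 m Ω u2) ^ 2)
      = ∫ x in Ω, D x := hDint.symm
    _ ≤ _ := hmono
    _ = aForm m Ω P Rv q1 q2 u1 u2 u1 u2 := by
        have hAB : Integrable (fun x =>
            (grad m u1 x ⬝ᵥ (P x).mulVec (grad m u1 x)
              + grad m u2 x ⬝ᵥ (P x).mulVec (grad m u2 x))
            + (u1 x * (Rv x ⬝ᵥ grad m u1 x) + u2 x * (Rv x ⬝ᵥ grad m u2 x))) μ :=
          hA.add hBint
        rw [aForm, integral_add hAB hC, integral_add hA hBint]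
end

section
/- Suppose P : ℝ^m → ℝ^{m×m} has continuously differentiable entries, P(x) is symmetric, and ξ·P(x)ξ ≥ α|ξ|² for all x ∈ Ω and all ξ ∈ ℝ^m with α > 0; suppose R = (r_1,…,r_m) : ℝ^m → ℝ^m is continuous with |r_k(x)| ≤ R_k on Ω and B = (Σ_k R_k²)^{1/2}; suppose q1, q2 : ℝ^m → ℝ are continuous with q1(x) ≥ α/2 + B²/(2α) on Ω; and let f1, f2 : Ω → ℝ. If (u1,u2) and (v1,v2) are two pairs of twice continuously differentiable functions on ℝ^m whose supports are compact and contained in Ω, and both pairs satisfy pointwise on Ω the coupled system −∇·(P∇w1) + R·∇w1 + q1 w1 + q2 w2 = f1 and −∇·(P∇w2) + R·∇w2 + q1 w2 − q2 w1 = f2, then u1 = v1 and u2 = v2. -/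
open MeasureTheory Matrix

/-- The divergence `∇·(P∇w)` at `x`:
`∑ i ∂/∂x_i ( (P ∇w)_i )`. -/
noncomputable def divPgrad (m : ℕ) (P : (Fin m → ℝ) → Matrix (Fin m) (Fin m) ℝ)
    (w : (Fin m → ℝ) → ℝ) (x : Fin m → ℝ) : ℝ :=
  ∑ i, fderiv ℝ (fun y => (P y).mulVec (grad m w y) i) x (Pi.single i 1)

/-- Second partial derivatives. -/
noncomputable def D2 (m : ℕ) (w : (Fin m → ℝ) → ℝ) (x : Fin m → ℝ) (i j : Fin m) : ℝ :=
  fderiv ℝ (fun y => fderiv ℝ w y (Pi.single j 1)) x (Pi.single i 1)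

lemma contDiff_pd {m : ℕ} {w : (Fin m → ℝ) → ℝ} (hw : ContDiff ℝ 2 w) (j : Fin m) :
    ContDiff ℝ 1 (fun y => fderiv ℝ w y (Pi.single j 1)) :=
  (hw.fderiv_right (by norm_num)).clm_apply contDiff_const

lemma fderiv_apply_sum {m : ℕ} (f : (Fin m → ℝ) → ℝ) (x ξ : Fin m → ℝ) :
    fderiv ℝ f x ξ = ∑ i, ξ i * fderiv ℝ f x (Pi.single i 1) := by
  have hξ : ξ = ∑ i, ξ i • (Pi.single i (1:ℝ) : Fin m → ℝ) := by
    ext j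
    simp [Pi.single_apply, Finset.sum_apply]
  conv_lhs => rw [hξ]
  rw [map_sum]
  exact Finset.sum_congr rfl fun i _ => by rw [_root_.map_smul]; rfl

lemma pd_sub {m : ℕ} {u v : (Fin m → ℝ) → ℝ} (hu : ContDiff ℝ 2 u) (hv : ContDiff ℝ 2 v)
    (x ξ : Fin m → ℝ) :
    fderiv ℝ (fun y => u y - v y) x ξ = fderiv ℝ u x ξ - fderiv ℝ v x ξ := by
  rw [fderiv_fun_sub (hu.differentiable (by norm_num) x) (hv.differentiable (by norm_num) x)]
  rfl

lemma D2_sub {m : ℕ} {u v : (Fin m → ℝ) → ℝ} (hu : ContDiff ℝ 2 u) (hv : ContDiff ℝ 2 v)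
    (x : Fin m → ℝ) (i j : Fin m) :
    D2 m (fun y => u y - v y) x i j = D2 m u x i j - D2 m v x i j := by
  unfold D2
  have h1 : (fun y => fderiv ℝ (fun z => u z - v z) y (Pi.single j 1))
      = fun y => fderiv ℝ u y (Pi.single j 1) - fderiv ℝ v y (Pi.single j 1) :=
    funext fun y => pd_sub hu hv y _
  rw [h1, fderiv_fun_sub ((contDiff_pd hu j).differentiable one_ne_zero x)
    ((contDiff_pd hv j).differentiable one_ne_zero x)]
  rfl

lemma divPgrad_expand {m : ℕ} {P : (Fin m → ℝ) → Matrix (Fin m) (Fin m) ℝ}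
    (hPc : ∀ i j, ContDiff ℝ 1 fun x => P x i j)
    {w : (Fin m → ℝ) → ℝ} (hw : ContDiff ℝ 2 w) (x : Fin m → ℝ) :
    divPgrad m P w x = ∑ i, ∑ j,
      (fderiv ℝ (fun y => P y i j) x (Pi.single i 1) * fderiv ℝ w x (Pi.single j 1)
        + P x i j * D2 m w x i j) := by
  unfold divPgrad
  refine Finset.sum_congr rfl fun i _ => ?_
  have h1 : (fun y => (P y).mulVec (grad m w y) i)
      = fun y => ∑ j, P y i j * fderiv ℝ w y (Pi.single j 1) := by
    funext y; simp [Matrix.mulVec, dotProduct, grad]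
  rw [h1, fderiv_fun_sum (fun j _ =>
    (((hPc i j).differentiable one_ne_zero) x).fun_mul (((contDiff_pd hw j).differentiable one_ne_zero) x))]
  rw [ContinuousLinearMap.sum_apply]
  refine Finset.sum_congr rfl fun j _ => ?_
  rw [fderiv_fun_mul (((hPc i j).differentiable one_ne_zero) x)
    (((contDiff_pd hw j).differentiable one_ne_zero) x)]
  simp only [ContinuousLinearMap.add_apply, ContinuousLinearMap.smul_apply, smul_eq_mul, D2]
  ring

lemma divPgrad_sub {m : ℕ} {P : (Fin m → ℝ) → Matrix (Fin m) (Fin m) ℝ}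
    (hPc : ∀ i j, ContDiff ℝ 1 fun x => P x i j)
    {u v : (Fin m → ℝ) → ℝ} (hu : ContDiff ℝ 2 u) (hv : ContDiff ℝ 2 v) (x : Fin m → ℝ) :
    divPgrad m P (fun y => u y - v y) x = divPgrad m P u x - divPgrad m P v x := by
  rw [divPgrad_expand hPc (hu.sub hv) x, divPgrad_expand hPc hu x, divPgrad_expand hPc hv x,
    ← Finset.sum_sub_distrib]
  refine Finset.sum_congr rfl fun i _ => ?_
  rw [← Finset.sum_sub_distrib]
  refine Finset.sum_congr rfl fun j _ => ?_
  rw [pd_sub hu hv, D2_sub hu hv]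
  ring

lemma F_fderiv_apply {m : ℕ} {w1 w2 : (Fin m → ℝ) → ℝ}
    (h1 : ContDiff ℝ 2 w1) (h2 : ContDiff ℝ 2 w2) (y ξ : Fin m → ℝ) :
    fderiv ℝ (fun z => w1 z * w1 z + w2 z * w2 z) y ξ
      = 2 * (w1 y * fderiv ℝ w1 y ξ) + 2 * (w2 y * fderiv ℝ w2 y ξ) := by
  have d1 := (h1.differentiable (by norm_num) y).hasFDerivAt
  have d2 := (h2.differentiable (by norm_num) y).hasFDerivAt
  have hF := ((d1.mul d1).add (d2.mul d2)).fderiv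
  rw [show (fun z => w1 z * w1 z + w2 z * w2 z) = w1 * w1 + w2 * w2 from rfl, hF]
  simp only [ContinuousLinearMap.add_apply, ContinuousLinearMap.smul_apply, smul_eq_mul]
  ring

lemma F_D2 {m : ℕ} {w1 w2 : (Fin m → ℝ) → ℝ}
    (h1 : ContDiff ℝ 2 w1) (h2 : ContDiff ℝ 2 w2) (x : Fin m → ℝ) (i j : Fin m) :
    D2 m (fun z => w1 z * w1 z + w2 z * w2 z) x i j
      = 2 * (fderiv ℝ w1 x (Pi.single i 1) * fderiv ℝ w1 x (Pi.single j 1))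
        + 2 * (w1 x * D2 m w1 x i j)
        + 2 * (fderiv ℝ w2 x (Pi.single i 1) * fderiv ℝ w2 x (Pi.single j 1))
        + 2 * (w2 x * D2 m w2 x i j) := by
  unfold D2
  have h1' : (fun y => fderiv ℝ (fun z => w1 z * w1 z + w2 z * w2 z) y (Pi.single j 1))
      = fun y => 2 * (w1 y * fderiv ℝ w1 y (Pi.single j 1))
        + 2 * (w2 y * fderiv ℝ w2 y (Pi.single j 1)) :=
    funext fun y => F_fderiv_apply h1 h2 y _
  rw [h1']
  have d1 := (h1.differentiable (by norm_num) x).hasFDerivAt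
  have d2 := (h2.differentiable (by norm_num) x).hasFDerivAt
  have dG1 := ((contDiff_pd h1 j).differentiable one_ne_zero x).hasFDerivAt
  have dG2 := ((contDiff_pd h2 j).differentiable one_ne_zero x).hasFDerivAt
  have hD := (((d1.mul dG1).const_mul (2:ℝ)).add ((d2.mul dG2).const_mul (2:ℝ))).fderiv
  rw [show (fun y => 2 * (w1 y * fderiv ℝ w1 y (Pi.single j 1))
      + 2 * (w2 y * fderiv ℝ w2 y (Pi.single j 1)))
    = ((fun y => 2 * (w1 * fun y => fderiv ℝ w1 y (Pi.single j 1)) y)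
      + fun y => 2 * (w2 * fun y => fderiv ℝ w2 y (Pi.single j 1)) y) from rfl, hD]
  simp only [ContinuousLinearMap.add_apply, ContinuousLinearMap.smul_apply, smul_eq_mul]
  ring

lemma second_deriv_test {g g' : ℝ → ℝ} {c : ℝ}
    (hg : ∀ t, HasDerivAt g (g' t) t)
    (hmax : ∀ t, g t ≤ g 0) (h0 : HasDerivAt g' c 0) : c ≤ 0 := by
  by_contra h
  push_neg at h
  have hg'0 : g' 0 = 0 := by
    have h1 : IsLocalMax g 0 := Filter.Eventually.of_forall hmax
    have := h1.deriv_eq_zero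
    rwa [(hg 0).deriv] at this
  rw [hasDerivAt_iff_tendsto_slope] at h0
  have hev : ∀ᶠ t in nhdsWithin (0:ℝ) (Set.Ioi 0), 0 < slope g' 0 t := by
    have h2 : ∀ᶠ t in nhdsWithin (0:ℝ) {(0:ℝ)}ᶜ, 0 < slope g' 0 t :=
      h0.eventually_const_lt h
    exact h2.filter_mono (nhdsWithin_mono _ (fun t ht => ne_of_gt ht))
  obtain ⟨δ, hδ, hsub⟩ := mem_nhdsGT_iff_exists_Ioo_subset.1 hev
  have hpos : ∀ t ∈ Set.Ioo (0:ℝ) δ, 0 < g' t := by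
    intro t ht
    have h3 : 0 < g' t / t := by
      have := hsub ht
      simp only [Set.mem_setOf_eq, slope_def_field, hg'0, sub_zero] at this
      simpa [div_eq_inv_mul] using this
    rcases div_pos_iff.1 h3 with ⟨h4, _⟩ | ⟨_, h5⟩
    · exact h4
    · exact absurd ht.1 (not_lt.2 h5.le)
  have hmono : StrictMonoOn g (Set.Icc 0 δ) := by
    apply strictMonoOn_of_deriv_pos (convex_Icc 0 δ)
    · exact Continuous.continuousOn (by
        exact continuous_iff_continuousAt.2 fun t => (hg t).differentiableAt.continuousAt)
    · intro t ht
      rw [interior_Icc] at ht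
      rw [(hg t).deriv]
      exact hpos t ht
  have := hmono (Set.left_mem_Icc.2 hδ.le) (Set.right_mem_Icc.2 hδ.le) hδ
  exact absurd (hmax δ) (not_le.2 this)

lemma D2_quadform {m : ℕ} {F : (Fin m → ℝ) → ℝ} (hF : ContDiff ℝ 2 F) (x0 : Fin m → ℝ)
    (hmax : ∀ y, F y ≤ F x0) (ξ : Fin m → ℝ) :
    ∑ i, ∑ j, ξ i * ξ j * D2 m F x0 i j ≤ 0 := by
  have hline : ∀ t : ℝ, HasDerivAt (fun s : ℝ => x0 + s • ξ) ξ t := by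
    intro t
    simpa using ((hasDerivAt_id t).smul_const ξ).const_add x0
  have hg : ∀ t : ℝ, HasDerivAt (fun s => F (x0 + s • ξ))
      (fderiv ℝ F (x0 + t • ξ) ξ) t := fun t =>
    ((hF.differentiable (by norm_num) _).hasFDerivAt).comp_hasDerivAt t (hline t)
  have hinner : ContDiff ℝ 1 (fun y => fderiv ℝ F y ξ) :=
    (hF.fderiv_right (by norm_num)).clm_apply contDiff_const
  have h0 : HasDerivAt (fun t : ℝ => fderiv ℝ F (x0 + t • ξ) ξ)
      (fderiv ℝ (fun y => fderiv ℝ F y ξ) x0 ξ) 0 := by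
    have := ((hinner.differentiable one_ne_zero (x0 + (0:ℝ) • ξ)).hasFDerivAt).comp_hasDerivAt
      (0:ℝ) (hline 0)
    simpa [Function.comp_def] using this
  have hc : fderiv ℝ (fun y => fderiv ℝ F y ξ) x0 ξ ≤ 0 := by
    refine second_deriv_test hg ?_ h0
    intro t
    simpa using hmax (x0 + t • ξ)
  have hexp : fderiv ℝ (fun y => fderiv ℝ F y ξ) x0 ξ
      = ∑ j, ξ j * ∑ i, ξ i * D2 m F x0 i j := by
    have h1 : (fun y => fderiv ℝ F y ξ)
        = fun y => ∑ j, ξ j * fderiv ℝ F y (Pi.single j 1) :=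
      funext fun y => fderiv_apply_sum F y ξ
    rw [h1, fderiv_fun_sum (fun j _ => ((contDiff_pd hF j).differentiable one_ne_zero x0).const_mul _)]
    rw [ContinuousLinearMap.sum_apply]
    refine Finset.sum_congr rfl fun j _ => ?_
    rw [fderiv_const_mul ((contDiff_pd hF j).differentiable one_ne_zero x0)]
    simp only [ContinuousLinearMap.smul_apply, smul_eq_mul]
    rw [fderiv_apply_sum]
    rfl
  calc ∑ i, ∑ j, ξ i * ξ j * D2 m F x0 i j
      = ∑ j, ξ j * ∑ i, ξ i * D2 m F x0 i j := by
        rw [Finset.sum_comm]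
        refine Finset.sum_congr rfl fun j _ => ?_
        rw [Finset.mul_sum]
        exact Finset.sum_congr rfl fun i _ => by ring
    _ ≤ 0 := hexp ▸ hc

open scoped MatrixOrder in
lemma trace_ineq {m : ℕ} (P0 : Matrix (Fin m) (Fin m) ℝ) (H : Fin m → Fin m → ℝ)
    (hsymm : P0.IsSymm) (hpsd : ∀ ξ : Fin m → ℝ, 0 ≤ ξ ⬝ᵥ P0.mulVec ξ)
    (hH : ∀ v : Fin m → ℝ, ∑ i, ∑ j, v i * v j * H i j ≤ 0) :
    ∑ i, ∑ j, P0 i j * H i j ≤ 0 := by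
  have hherm : P0.IsHermitian := by
    exact Matrix.isHermitian_iff_isSymm.mpr hsymm
  have hps : P0.PosSemidef := .of_dotProduct_mulVec_nonneg hherm fun x => by simpa using hpsd x
  obtain ⟨S, hSS⟩ := CStarAlgebra.nonneg_iff_eq_star_mul_self.mp hps.nonneg
  replace hSS : star S * S = P0 := hSS.symm
  have hSsymm : ∀ i j, (star S) i j = S j i := by
    intro i j
    simp
  calc ∑ i, ∑ j, P0 i j * H i j
      = ∑ i, ∑ j, ∑ k, S k i * S k j * H i j := by
        refine Finset.sum_congr rfl fun i _ => Finset.sum_congr rfl fun j _ => ?_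
        rw [← hSS, Matrix.mul_apply, Finset.sum_mul]
        exact Finset.sum_congr rfl fun k _ => by rw [hSsymm i k]
    _ = ∑ k, ∑ i, ∑ j, S k i * S k j * H i j := by
        have h1 : (∑ i, ∑ j, ∑ k, S k i * S k j * H i j)
            = ∑ i, ∑ k, ∑ j, S k i * S k j * H i j :=
          Finset.sum_congr rfl fun i _ => Finset.sum_comm
        rw [h1, Finset.sum_comm]
    _ ≤ 0 := Finset.sum_nonpos fun k _ => hH (fun i => S k i)

theorem stmt6 (m : ℕ) (hm : 1 ≤ m)
    (Ω : Set (Fin m → ℝ)) (hΩo : IsOpen Ω) (hΩb : Bornology.IsBounded Ω)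
    (P : (Fin m → ℝ) → Matrix (Fin m) (Fin m) ℝ)
    (hPc : ∀ i j, ContDiff ℝ 1 fun x => P x i j)
    (hPsymm : ∀ x ∈ Ω, (P x).IsSymm)
    (α : ℝ) (hα : 0 < α)
    (hell : ∀ x ∈ Ω, ∀ ξ : Fin m → ℝ, α * ∑ i, (ξ i) ^ 2 ≤ ξ ⬝ᵥ (P x).mulVec ξ)
    (Rv : (Fin m → ℝ) → Fin m → ℝ) (hRc : Continuous Rv)
    (R : Fin m → ℝ) (hRbd : ∀ x ∈ Ω, ∀ k, |Rv x k| ≤ R k)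
    (B : ℝ) (hB : B = Real.sqrt (∑ k, (R k) ^ 2))
    (q1 q2 : (Fin m → ℝ) → ℝ) (hq1c : Continuous q1) (hq2c : Continuous q2)
    (hq1lb : ∀ x ∈ Ω, α / 2 + B ^ 2 / (2 * α) ≤ q1 x)
    (f1 f2 : (Fin m → ℝ) → ℝ)
    (u1 u2 v1 v2 : (Fin m → ℝ) → ℝ)
    (hu1 : ContDiff ℝ 2 u1) (hu2 : ContDiff ℝ 2 u2)
    (hv1 : ContDiff ℝ 2 v1) (hv2 : ContDiff ℝ 2 v2)
    (hu1s : HasCompactSupport u1) (hu2s : HasCompactSupport u2)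
    (hv1s : HasCompactSupport v1) (hv2s : HasCompactSupport v2)
    (hu1Ω : tsupport u1 ⊆ Ω) (hu2Ω : tsupport u2 ⊆ Ω)
    (hv1Ω : tsupport v1 ⊆ Ω) (hv2Ω : tsupport v2 ⊆ Ω)
    (hueq1 : ∀ x ∈ Ω,
      -divPgrad m P u1 x + Rv x ⬝ᵥ grad m u1 x + q1 x * u1 x + q2 x * u2 x = f1 x)
    (hueq2 : ∀ x ∈ Ω,
      -divPgrad m P u2 x + Rv x ⬝ᵥ grad m u2 x + q1 x * u2 x - q2 x * u1 x = f2 x)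
    (hveq1 : ∀ x ∈ Ω,
      -divPgrad m P v1 x + Rv x ⬝ᵥ grad m v1 x + q1 x * v1 x + q2 x * v2 x = f1 x)
    (hveq2 : ∀ x ∈ Ω,
      -divPgrad m P v2 x + Rv x ⬝ᵥ grad m v2 x + q1 x * v2 x - q2 x * v1 x = f2 x) :
    u1 = v1 ∧ u2 = v2 := by
  classical
  set w1 : (Fin m → ℝ) → ℝ := fun y => u1 y - v1 y with hw1def
  set w2 : (Fin m → ℝ) → ℝ := fun y => u2 y - v2 y with hw2def
  have hw1 : ContDiff ℝ 2 w1 := hu1.sub hv1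
  have hw2 : ContDiff ℝ 2 w2 := hu2.sub hv2
  -- homogeneous equations for w1, w2
  have hgsub : ∀ (u v : (Fin m → ℝ) → ℝ), ContDiff ℝ 2 u → ContDiff ℝ 2 v → ∀ x,
      Rv x ⬝ᵥ grad m (fun y => u y - v y) x
        = Rv x ⬝ᵥ grad m u x - Rv x ⬝ᵥ grad m v x := by
    intro u v hu hv x
    simp only [dotProduct, grad]
    rw [← Finset.sum_sub_distrib]
    refine Finset.sum_congr rfl fun k _ => ?_
    rw [pd_sub hu hv]
    ring
  have hE1 : ∀ x ∈ Ω, -divPgrad m P w1 x + Rv x ⬝ᵥ grad m w1 x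
      + q1 x * w1 x + q2 x * w2 x = 0 := by
    intro x hx
    have h1 := hueq1 x hx
    have h2 := hveq1 x hx
    have h3 := divPgrad_sub hPc hu1 hv1 x
    have h4 := hgsub u1 v1 hu1 hv1 x
    simp only [hw1def, hw2def] at h3 h4 ⊢
    rw [h3, h4]
    ring_nf
    ring_nf at h1 h2
    linarith
  have hE2 : ∀ x ∈ Ω, -divPgrad m P w2 x + Rv x ⬝ᵥ grad m w2 x
      + q1 x * w2 x - q2 x * w1 x = 0 := by
    intro x hx
    have h1 := hueq2 x hx
    have h2 := hveq2 x hx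
    have h3 := divPgrad_sub hPc hu2 hv2 x
    have h4 := hgsub u2 v2 hu2 hv2 x
    simp only [hw1def, hw2def] at h3 h4 ⊢
    rw [h3, h4]
    ring_nf
    ring_nf at h1 h2
    linarith
  -- the energy function F
  set F : (Fin m → ℝ) → ℝ := fun y => w1 y * w1 y + w2 y * w2 y with hFdef
  have hFcd : ContDiff ℝ 2 F := (hw1.mul hw1).add (hw2.mul hw2)
  have hFs : HasCompactSupport F := by
    apply HasCompactSupport.intro
      (((hu1s.union hv1s).union (hu2s.union hv2s)) : IsCompact _)
    intro y hy
    simp only [Set.mem_union] at hy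
    push_neg at hy
    have h1 : u1 y = 0 := image_eq_zero_of_notMem_tsupport hy.1.1
    have h2 : v1 y = 0 := image_eq_zero_of_notMem_tsupport hy.1.2
    have h3 : u2 y = 0 := image_eq_zero_of_notMem_tsupport hy.2.1
    have h4 : v2 y = 0 := image_eq_zero_of_notMem_tsupport hy.2.2
    simp [hFdef, hw1def, hw2def, h1, h2, h3, h4]
  obtain ⟨x0, hx0max⟩ := hFcd.continuous.exists_forall_ge_of_hasCompactSupport hFs
  rcases le_or_gt (F x0) 0 with hFle | hFpos
  · -- F ≤ 0 everywhere, hence w1 = w2 = 0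
    have hzero : ∀ y, w1 y = 0 ∧ w2 y = 0 := by
      intro y
      have h1 := hx0max y
      have h2 : 0 ≤ w1 y * w1 y := mul_self_nonneg _
      have h3 : 0 ≤ w2 y * w2 y := mul_self_nonneg _
      have h1' : w1 y * w1 y + w2 y * w2 y ≤ 0 := by
        have h5 := le_trans h1 hFle
        simpa [hFdef] using h5
      have h4 : w1 y * w1 y = 0 ∧ w2 y * w2 y = 0 := by
        constructor <;> nlinarith
      exact ⟨mul_self_eq_zero.1 h4.1, mul_self_eq_zero.1 h4.2⟩
    constructor
    · funext y
      have := (hzero y).1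
      simp only [hw1def] at this
      linarith
    · funext y
      have := (hzero y).2
      simp only [hw2def] at this
      linarith
  · -- interior maximum: contradiction
    exfalso
    have hx0Ω : x0 ∈ Ω := by
      have hne : w1 x0 ≠ 0 ∨ w2 x0 ≠ 0 := by
        by_contra h
        push_neg at h
        rw [hFdef] at hFpos
        simp only [h.1, h.2] at hFpos
        norm_num at hFpos
      rcases hne with h | h
      · have : u1 x0 ≠ 0 ∨ v1 x0 ≠ 0 := by
          by_contra hc
          push_neg at hc
          exact h (by simp [hw1def, hc.1, hc.2])
        rcases this with h' | h'
        · exact hu1Ω (subset_tsupport u1 h')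
        · exact hv1Ω (subset_tsupport v1 h')
      · have : u2 x0 ≠ 0 ∨ v2 x0 ≠ 0 := by
          by_contra hc
          push_neg at hc
          exact h (by simp [hw2def, hc.1, hc.2])
        rcases this with h' | h'
        · exact hu2Ω (subset_tsupport u2 h')
        · exact hv2Ω (subset_tsupport v2 h')
    -- gradient of F vanishes at x0
    have hgradF0 : ∀ j, fderiv ℝ F x0 (Pi.single j 1) = 0 := by
      intro j
      have h1 : IsLocalMax F x0 := Filter.Eventually.of_forall hx0max
      rw [h1.fderiv_eq_zero]
      rfl
    have hkey : ∀ j : Fin m, w1 x0 * fderiv ℝ w1 x0 (Pi.single j 1)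
        + w2 x0 * fderiv ℝ w2 x0 (Pi.single j 1) = 0 := by
      intro j
      have h1 := F_fderiv_apply hw1 hw2 x0 (Pi.single j 1)
      rw [hgradF0 j] at h1
      linarith
    -- R term vanishes
    have hR : w1 x0 * (Rv x0 ⬝ᵥ grad m w1 x0) + w2 x0 * (Rv x0 ⬝ᵥ grad m w2 x0) = 0 := by
      simp only [dotProduct, grad, Finset.mul_sum]
      rw [← Finset.sum_add_distrib]
      apply Finset.sum_eq_zero
      intro k _
      have h1 := hkey k
      linear_combination Rv x0 k * h1
    -- trace term
    have hT : ∑ i, ∑ j, P x0 i j * D2 m F x0 i j ≤ 0 :=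
      trace_ineq (P x0) (fun i j => D2 m F x0 i j) (hPsymm x0 hx0Ω)
        (fun ξ => le_trans (by positivity) (hell x0 hx0Ω ξ))
        (D2_quadform hFcd x0 hx0max)
    -- divergence identity at x0
    have hQ1e : (grad m w1 x0) ⬝ᵥ (P x0).mulVec (grad m w1 x0)
        = ∑ i, ∑ j, P x0 i j * (fderiv ℝ w1 x0 (Pi.single i 1)
          * fderiv ℝ w1 x0 (Pi.single j 1)) := by
      simp only [dotProduct, Matrix.mulVec, grad, Finset.mul_sum]
      exact Finset.sum_congr rfl fun i _ => Finset.sum_congr rfl fun j _ => by ring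
    have hQ2e : (grad m w2 x0) ⬝ᵥ (P x0).mulVec (grad m w2 x0)
        = ∑ i, ∑ j, P x0 i j * (fderiv ℝ w2 x0 (Pi.single i 1)
          * fderiv ℝ w2 x0 (Pi.single j 1)) := by
      simp only [dotProduct, Matrix.mulVec, grad, Finset.mul_sum]
      exact Finset.sum_congr rfl fun i _ => Finset.sum_congr rfl fun j _ => by ring
    have hQ1 : 0 ≤ (grad m w1 x0) ⬝ᵥ (P x0).mulVec (grad m w1 x0) := by
      refine le_trans ?_ (hell x0 hx0Ω _)
      positivity
    have hQ2 : 0 ≤ (grad m w2 x0) ⬝ᵥ (P x0).mulVec (grad m w2 x0) := by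
      refine le_trans ?_ (hell x0 hx0Ω _)
      positivity
    have hdiv : w1 x0 * divPgrad m P w1 x0 + w2 x0 * divPgrad m P w2 x0
        = (∑ i, ∑ j, P x0 i j * D2 m F x0 i j) / 2
          - (grad m w1 x0) ⬝ᵥ (P x0).mulVec (grad m w1 x0)
          - (grad m w2 x0) ⬝ᵥ (P x0).mulVec (grad m w2 x0) := by
      rw [hQ1e, hQ2e, divPgrad_expand hPc hw1 x0, divPgrad_expand hPc hw2 x0]
      rw [Finset.mul_sum, Finset.mul_sum, Finset.sum_div, ← Finset.sum_sub_distrib,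
        ← Finset.sum_sub_distrib, ← Finset.sum_add_distrib]
      refine Finset.sum_congr rfl fun i _ => ?_
      rw [Finset.mul_sum, Finset.mul_sum, Finset.sum_div, ← Finset.sum_sub_distrib,
        ← Finset.sum_sub_distrib, ← Finset.sum_add_distrib]
      refine Finset.sum_congr rfl fun j _ => ?_
      have hFD2 : D2 m F x0 i j
          = 2 * (fderiv ℝ w1 x0 (Pi.single i 1) * fderiv ℝ w1 x0 (Pi.single j 1))
            + 2 * (w1 x0 * D2 m w1 x0 i j)
            + 2 * (fderiv ℝ w2 x0 (Pi.single i 1) * fderiv ℝ w2 x0 (Pi.single j 1))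
            + 2 * (w2 x0 * D2 m w2 x0 i j) := F_D2 hw1 hw2 x0 i j
      rw [hFD2]
      have h1 := hkey j
      linear_combination fderiv ℝ (fun y => P y i j) x0 (Pi.single i 1) * h1
    -- final contradiction
    have he1 := hE1 x0 hx0Ω
    have he2 := hE2 x0 hx0Ω
    have hcomb : -(w1 x0 * divPgrad m P w1 x0 + w2 x0 * divPgrad m P w2 x0)
        + (w1 x0 * (Rv x0 ⬝ᵥ grad m w1 x0) + w2 x0 * (Rv x0 ⬝ᵥ grad m w2 x0))
        + q1 x0 * F x0 = 0 := by
      simp only [hFdef]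
      linear_combination w1 x0 * he1 + w2 x0 * he2
    rw [hdiv, hR] at hcomb
    have hq1pos : 0 < q1 x0 := by
      have h1 := hq1lb x0 hx0Ω
      have h2 : 0 ≤ B ^ 2 / (2 * α) := by positivity
      linarith
    have hFpos' : 0 < w1 x0 * w1 x0 + w2 x0 * w2 x0 := by simpa [hFdef] using hFpos
    nlinarith [mul_pos hq1pos hFpos, mul_pos hq1pos hFpos', hT, hQ1, hQ2]
end
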